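/- arXiv:1709.09416 — 2 statements merged into one kernel-verified Lean document; each statement's English description precedes it below -/
import Mathlib

section
/- Let W be a pointy potential on ℝ^d with constants λ ∈ ℝ and w_∞ ≥ 0. For a probability measure ρ on ℝ^d, define the velocity field â_ρ(x) := −∫_{ℝ^d} ∇̂W(x − y) ρ(dy). Then: (1) |â_ρ(x)| ≤ w_∞ for all x ∈ ℝ^d; (2) â_ρ satisfies the one-sided Lipschitz estimate ⟨â_ρ(x) − â_ρ(y), x − y⟩ ≤ −λ |x − y|² for all x, y ∈ ℝ^d. -/
open MeasureTheory Real Set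
open scoped RealInnerProductSpace ENNReal

noncomputable section

/-- `ℝ^d` with the Euclidean structure. -/
abbrev Euc (d : ℕ) := EuclideanSpace ℝ (Fin d)

open Classical in
/-- `∇̂W`: the gradient of `W` away from `0`, and `0` at `0`. -/
def hatGrad {d : ℕ} (W : Euc d → ℝ) (x : Euc d) : Euc d :=
  if x = 0 then 0 else gradient W x

/-- subgradient inequality for a convex function at a point of differentiability -/
lemma convex_inner_le {d : ℕ} {f : Euc d → ℝ} (hf : ConvexOn ℝ Set.univ f)
    {u g : Euc d} (hg : HasGradientAt f g u) (w : Euc d) :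
    ⟪g, w - u⟫ ≤ f w - f u := by
  set c : ℝ → Euc d := fun t => u + t • (w - u) with hc
  have hcderiv : HasDerivAt c (w - u) 0 := by
    simpa [hc] using (((hasDerivAt_id (0 : ℝ)).smul_const (w - u)).const_add u)
  have hg' : HasFDerivAt f (InnerProductSpace.toDual ℝ (Euc d) g) (c 0) := by
    simpa [hc] using hg.hasFDerivAt
  have hφ : HasDerivAt (fun t => f (c t)) ⟪g, w - u⟫ 0 := by
    simpa [InnerProductSpace.toDual_apply_apply, Function.comp_def] using hg'.comp_hasDerivAt 0 hcderiv
  have hconv1 : ConvexOn ℝ Set.univ (fun t => f (c t)) := by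
    have h := hf.comp_affineMap (AffineMap.lineMap u w : ℝ →ᵃ[ℝ] Euc d)
    have heq : (fun t => f (c t)) = f ∘ (AffineMap.lineMap u w : ℝ →ᵃ[ℝ] Euc d) := by
      funext t
      simp [Function.comp, AffineMap.lineMap_apply, hc, add_comm]
    rw [heq]
    simpa using h
  have := hconv1.le_slope_of_hasDerivAt (Set.mem_univ 0) (Set.mem_univ 1) one_pos hφ
  simpa [slope_def_field, hc] using this

/-- gradient of `x ↦ lam/2 * ‖x‖^2` -/
lemma hasGradientAt_normsq {d : ℕ} (lam : ℝ) (u : Euc d) :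
    HasGradientAt (fun x : Euc d => lam / 2 * ‖x‖ ^ 2) (lam • u) u := by
  rw [hasGradientAt_iff_hasFDerivAt]
  have hin : HasFDerivAt (fun x : Euc d => ⟪x, x⟫)
      ((fderivInnerCLM ℝ (u, u)).comp ((ContinuousLinearMap.id ℝ (Euc d)).prod
        (ContinuousLinearMap.id ℝ (Euc d)))) u :=
    (hasFDerivAt_id u).inner ℝ (hasFDerivAt_id u)
  have h2 : HasFDerivAt (fun x : Euc d => lam / 2 * ⟪x, x⟫)
      ((lam / 2) • ((fderivInnerCLM ℝ (u, u)).comp ((ContinuousLinearMap.id ℝ (Euc d)).prod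
        (ContinuousLinearMap.id ℝ (Euc d))))) u := hin.const_mul (lam / 2)
  have heq : (fun x : Euc d => lam / 2 * ‖x‖ ^ 2) = fun x : Euc d => lam / 2 * ⟪x, x⟫ := by
    funext x; rw [real_inner_self_eq_norm_sq]
  rw [heq]
  refine h2.congr_fderiv ?_
  ext v
  simp [fderivInnerCLM_apply, InnerProductSpace.toDual_apply_apply, real_inner_smul_left,
    real_inner_comm u v]
  ring

lemma hasGradientAt_V {d : ℕ} (W : Euc d → ℝ) (lam : ℝ)
    (hC1 : ContDiffOn ℝ 1 W {(0 : Euc d)}ᶜ) {u : Euc d} (hu : u ≠ 0) :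
    HasGradientAt (fun x : Euc d => W x - lam / 2 * ‖x‖ ^ 2) (hatGrad W u - lam • u) u := by
  have hmem : {(0 : Euc d)}ᶜ ∈ nhds u := isOpen_compl_singleton.mem_nhds (by simpa using hu)
  have hdiff : DifferentiableAt ℝ W u :=
    (hC1.contDiffAt hmem).differentiableAt one_ne_zero
  have hW : HasGradientAt W (hatGrad W u) u := by
    rw [hatGrad, if_neg hu]; exact hdiff.hasGradientAt
  rw [hasGradientAt_iff_hasFDerivAt, map_sub]
  exact hW.hasFDerivAt.sub (hasGradientAt_normsq lam u).hasFDerivAt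

lemma hatGrad_mono {d : ℕ} (W : Euc d → ℝ) (lam : ℝ)
    (hsymm : ∀ x : Euc d, W (-x) = W x)
    (hconv : ConvexOn ℝ Set.univ (fun x : Euc d => W x - lam / 2 * ‖x‖ ^ 2))
    (hC1 : ContDiffOn ℝ 1 W {(0 : Euc d)}ᶜ) (u v : Euc d) :
    lam * ‖u - v‖ ^ 2 ≤ ⟪hatGrad W u - hatGrad W v, u - v⟫ := by
  have key : ∀ z : Euc d, z ≠ 0 → ∀ w : Euc d,
      ⟪hatGrad W z - lam • z, w - z⟫ ≤
        (W w - lam / 2 * ‖w‖ ^ 2) - (W z - lam / 2 * ‖z‖ ^ 2) :=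
    fun z hz w => convex_inner_le hconv (hasGradientAt_V W lam hC1 hz) w
  have inner_self_nonneg : ∀ z : Euc d, z ≠ 0 → 0 ≤ ⟪hatGrad W z - lam • z, z⟫ := by
    intro z hz
    have h := key z hz (-z)
    have hVeq : (W (-z) - lam / 2 * ‖(-z : Euc d)‖ ^ 2) - (W z - lam / 2 * ‖z‖ ^ 2) = 0 := by
      rw [hsymm z, norm_neg]; ring
    rw [hVeq] at h
    have : (-z : Euc d) - z = -((2:ℝ) • z) := by
      rw [two_smul]; abel
    rw [this, inner_neg_right, real_inner_smul_right] at h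
    linarith
  by_cases hu : u = 0
  · by_cases hv : v = 0
    · simp [hu, hv]
    · have h := inner_self_nonneg v hv
      have hg0 : hatGrad W (0 : Euc d) = 0 := by rw [hatGrad, if_pos rfl]
      rw [hu, hg0, zero_sub, zero_sub, inner_neg_neg, norm_neg]
      have e : ⟪hatGrad W v, v⟫ = ⟪hatGrad W v - lam • v, v⟫ + lam * ‖v‖ ^ 2 := by
        rw [inner_sub_left, real_inner_smul_left, real_inner_self_eq_norm_sq]; ring
      rw [e]
      linarith
  · by_cases hv : v = 0
    · have h := inner_self_nonneg u hu
      have hg0 : hatGrad W (0 : Euc d) = 0 := by rw [hatGrad, if_pos rfl]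
      rw [hv, hg0, sub_zero, sub_zero]
      have e : ⟪hatGrad W u, u⟫ = ⟪hatGrad W u - lam • u, u⟫ + lam * ‖u‖ ^ 2 := by
        rw [inner_sub_left, real_inner_smul_left, real_inner_self_eq_norm_sq]; ring
      rw [e]
      linarith
    · have h1 := key u hu v
      have h2 := key v hv u
      have hsum : ⟪hatGrad W u - lam • u, v - u⟫ + ⟪hatGrad W v - lam • v, u - v⟫ ≤ 0 := by
        linarith
      have e1 : ⟪hatGrad W u - lam • u, v - u⟫ = -⟪hatGrad W u - lam • u, u - v⟫ := by
        rw [← inner_neg_right, neg_sub]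
      have e2 : ⟪hatGrad W u - hatGrad W v, u - v⟫
          = ⟪hatGrad W u - lam • u, u - v⟫ - ⟪hatGrad W v - lam • v, u - v⟫
            + ⟪lam • (u - v), u - v⟫ := by
        have hdecomp : hatGrad W u - hatGrad W v
            = ((hatGrad W u - lam • u) - (hatGrad W v - lam • v)) + lam • (u - v) := by
          rw [smul_sub]; abel
        rw [hdecomp, inner_add_left, inner_sub_left]
      have e3 : ⟪lam • (u - v), u - v⟫ = lam * ‖u - v‖ ^ 2 := by
        rw [real_inner_smul_left, real_inner_self_eq_norm_sq]
      rw [e2, e3]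
      linarith

/-- For a pointy potential `W` and a probability measure `ρ`, the velocity field
`â_ρ(x) = -∫ ∇̂W(x-y) ρ(dy)` is bounded by `w∞` and one-sided Lipschitz with constant `-λ`. -/
theorem stmt1 {d : ℕ} (hd : 1 ≤ d) (W : Euc d → ℝ) (lam winf : ℝ) (hwinf : 0 ≤ winf)
    (hsymm : ∀ x : Euc d, W (-x) = W x) (hW0 : W 0 = 0)
    (hconv : ConvexOn ℝ Set.univ (fun x : Euc d => W x - lam / 2 * ‖x‖ ^ 2))
    (hC1 : ContDiffOn ℝ 1 W {(0 : Euc d)}ᶜ)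
    (hbound : ∀ x : Euc d, x ≠ 0 → ‖gradient W x‖ ≤ winf)
    (ρ : Measure (Euc d)) [IsProbabilityMeasure ρ]
    (a : Euc d → Euc d) (ha : ∀ x, a x = -∫ y, hatGrad W (x - y) ∂ρ) :
    (∀ x, ‖a x‖ ≤ winf) ∧
    (∀ x y : Euc d, ⟪a x - a y, x - y⟫ ≤ -lam * ‖x - y‖ ^ 2) := by
  have hbnd : ∀ z : Euc d, ‖hatGrad W z‖ ≤ winf := by
    intro z
    rw [hatGrad]
    split_ifs with h
    · simpa using hwinf
    · exact hbound z h
  have hmeasg : Measurable (gradient W) := by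
    have : Measurable (fun x : Euc d => (InnerProductSpace.toDual ℝ (Euc d)).symm
        (fderiv ℝ W x)) :=
      (LinearIsometryEquiv.continuous _).measurable.comp (measurable_fderiv ℝ W)
    exact this
  have hmeas : Measurable (hatGrad W) := by
    unfold hatGrad
    exact Measurable.ite (p := fun x : Euc d => x = 0)
      (measurableSet_eq) measurable_const hmeasg
  have hint : ∀ x : Euc d, Integrable (fun z => hatGrad W (x - z)) ρ := by
    intro x
    refine ⟨(hmeas.comp (measurable_const.sub measurable_id)).aestronglyMeasurable, ?_⟩
    exact HasFiniteIntegral.of_bounded (C := winf) (ae_of_all _ fun z => hbnd _)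
  constructor
  · intro x
    rw [ha, norm_neg]
    have := norm_integral_le_of_norm_le_const (μ := ρ)
      (f := fun z => hatGrad W (x - z)) (C := winf) (ae_of_all _ fun z => hbnd _)
    simpa using this
  · intro x y
    have hsub : a x - a y = -∫ z, (hatGrad W (x - z) - hatGrad W (y - z)) ∂ρ := by
      rw [ha, ha, integral_sub (hint x) (hint y)]
      abel
    set L : Euc d →L[ℝ] ℝ := (innerSL ℝ (E := Euc d)).flip (x - y) with hL
    have hLapp : ∀ v : Euc d, L v = ⟪v, x - y⟫ := fun v => rfl
    have hintsub : Integrable (fun z => hatGrad W (x - z) - hatGrad W (y - z)) ρ :=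
      (hint x).sub (hint y)
    have hcomm : ∫ z, L (hatGrad W (x - z) - hatGrad W (y - z)) ∂ρ
        = L (∫ z, (hatGrad W (x - z) - hatGrad W (y - z)) ∂ρ) :=
      L.integral_comp_comm hintsub
    have hptwise : ∀ z : Euc d, lam * ‖x - y‖ ^ 2
        ≤ L (hatGrad W (x - z) - hatGrad W (y - z)) := by
      intro z
      have h := hatGrad_mono W lam hsymm hconv hC1 (x - z) (y - z)
      have he : (x - z) - (y - z) = x - y := by abel
      rw [he] at h
      rw [hLapp]
      exact h
    have hintL : Integrable (fun z => L (hatGrad W (x - z) - hatGrad W (y - z))) ρ :=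
      L.integrable_comp hintsub
    have hmono : lam * ‖x - y‖ ^ 2
        ≤ ∫ z, L (hatGrad W (x - z) - hatGrad W (y - z)) ∂ρ := by
      have := integral_mono (integrable_const (lam * ‖x - y‖ ^ 2)) hintL
        (fun z => hptwise z)
      simpa using this
    have hfin : ⟪a x - a y, x - y⟫
        = -∫ z, L (hatGrad W (x - z) - hatGrad W (y - z)) ∂ρ := by
      rw [hsub, inner_neg_left, hcomm, hLapp]
    rw [hfin]
    linarith
end
end

section
/- Let W be a pointy potential on ℝ^d with constants λ ∈ ℝ and w_∞ ≥ 0, let ρ^{ini} be a probability measure on ℝ^d, and assume the strict 1/2-CFL condition w_∞ Σ_{i=1}^d Δt/Δx_i < 1/2. Let ρ_J^0 := ρ^{ini}(C_J) and let (ρ_J^n)_{J∈ℤ^d, n∈ℕ} and ((a_i)_J^n) be produced by the upwind scheme. Then for all n ∈ ℕ and J ∈ ℤ^d: ρ_J^n ≥ 0; |(a_i)_J^n| ≤ w_∞ for every i = 1,…,d; and Σ_{J∈ℤ^d} ρ_J^n = 1. -/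
open MeasureTheory Real Set
open scoped RealInnerProductSpace ENNReal

noncomputable section

/-- Positive part `r⁺ = max(r,0)`. -/
def pos (r : ℝ) : ℝ := max r 0

/-- Negative part `r⁻ = max(-r,0)`. -/
def neg (r : ℝ) : ℝ := max (-r) 0

/-- The node `x_J = (J_1 Δx_1, …, J_d Δx_d)`. -/
def node {d : ℕ} (Δx : Fin d → ℝ) (J : Fin d → ℤ) : Euc d :=
  (EuclideanSpace.equiv (Fin d) ℝ).symm (fun i => (J i : ℝ) * Δx i)

/-- The cell `C_J = Π_i [(J_i - 1/2)Δx_i, (J_i + 1/2)Δx_i)`. -/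
def cell {d : ℕ} (Δx : Fin d → ℝ) (J : Fin d → ℤ) : Set (Euc d) :=
  {y | ∀ i, ((J i : ℝ) - 1/2) * Δx i ≤ y i ∧ y i < ((J i : ℝ) + 1/2) * Δx i}

/-- The discrete velocities `(a_i)_J = -Σ_K ρ_K (∇̂W)_i (x_J - x_K)`. -/
def discVel {d : ℕ} (W : Euc d → ℝ) (Δx : Fin d → ℝ) (ρ : (Fin d → ℤ) → ℝ)
    (J : Fin d → ℤ) (i : Fin d) : ℝ :=
  -∑' K : Fin d → ℤ, ρ K * hatGrad W (node Δx J - node Δx K) i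

/-- One step of the upwind scheme. -/
def upwindStep {d : ℕ} (Δx : Fin d → ℝ) (Δt : ℝ) (a : (Fin d → ℤ) → Fin d → ℝ)
    (ρ : (Fin d → ℤ) → ℝ) (J : Fin d → ℤ) : ℝ :=
  ρ J - ∑ i : Fin d, (Δt / Δx i) *
    (pos (a J i) * ρ J - neg (a (J + Pi.single i 1) i) * ρ (J + Pi.single i 1)
      - pos (a (J - Pi.single i 1) i) * ρ (J - Pi.single i 1) + neg (a J i) * ρ J)

lemma pos_nonneg' (r : ℝ) : 0 ≤ pos r := le_max_right _ _
lemma neg_nonneg' (r : ℝ) : 0 ≤ neg r := le_max_right _ _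
lemma pos_add_neg' (r : ℝ) : pos r + neg r = |r| := by
  rcases le_or_gt 0 r with h | h
  · simp [pos, neg, abs_of_nonneg h, max_eq_left, h, neg_nonpos.mpr h]
  · simp [pos, neg, abs_of_neg h, max_eq_right h.le, le_of_lt (neg_pos.mpr h)]

lemma pos_le_abs' (r : ℝ) : pos r ≤ |r| := max_le (le_abs_self r) (abs_nonneg r)
lemma neg_le_abs'' (r : ℝ) : neg r ≤ |r| := max_le (neg_le_abs r) (abs_nonneg r)

lemma abs_coord_le {d : ℕ} (x : Euc d) (i : Fin d) : |x i| ≤ ‖x‖ := by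
  rw [EuclideanSpace.norm_eq]
  have h : |x i| = Real.sqrt (‖x i‖ ^ 2) := by
    rw [Real.sqrt_sq_eq_abs, Real.norm_eq_abs, abs_abs]
  rw [h]
  exact Real.sqrt_le_sqrt
    (Finset.single_le_sum (f := fun j => ‖x j‖ ^ 2) (fun j _ => sq_nonneg _) (Finset.mem_univ i))









lemma velBound {d : ℕ} (W : Euc d → ℝ) (winf : ℝ) (hwinf : 0 ≤ winf)
    (hbound : ∀ x : Euc d, x ≠ 0 → ‖gradient W x‖ ≤ winf)
    (Δx : Fin d → ℝ) (ρ : (Fin d → ℤ) → ℝ) (hρ : ∀ K, 0 ≤ ρ K) (hsum : HasSum ρ 1)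
    (J : Fin d → ℤ) (i : Fin d) : |discVel W Δx ρ J i| ≤ winf := by
  have hg : ∀ x : Euc d, ‖hatGrad W x‖ ≤ winf := by
    intro x
    by_cases hx : x = 0
    · simp [hatGrad, hx, hwinf]
    · simpa [hatGrad, hx] using hbound x hx
  have hle : ∀ K, |ρ K * hatGrad W (node Δx J - node Δx K) i| ≤ winf * ρ K := by
    intro K
    rw [abs_mul, abs_of_nonneg (hρ K), mul_comm]
    exact mul_le_mul_of_nonneg_right ((abs_coord_le _ _).trans (hg _)) (hρ K)
  have hsum2 : Summable fun K => winf * ρ K := hsum.summable.mul_left winf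
  have habs : Summable fun K => |ρ K * hatGrad W (node Δx J - node Δx K) i| :=
    Summable.of_nonneg_of_le (fun _ => abs_nonneg _) hle hsum2
  have hsf : Summable fun K => ρ K * hatGrad W (node Δx J - node Δx K) i := habs.of_abs
  rw [discVel, abs_neg]
  have habs' : Summable fun K => ‖ρ K * hatGrad W (node Δx J - node Δx K) i‖ := by
    simpa only [Real.norm_eq_abs] using habs
  calc |∑' K, ρ K * hatGrad W (node Δx J - node Δx K) i|
      ≤ ∑' K, |ρ K * hatGrad W (node Δx J - node Δx K) i| := by
        simpa only [Real.norm_eq_abs] using norm_tsum_le_tsum_norm habs'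
    _ ≤ ∑' K, winf * ρ K := Summable.tsum_le_tsum hle habs hsum2
    _ = winf := by rw [(hsum.mul_left winf).tsum_eq, mul_one]

lemma stepNonneg {d : ℕ} (Δx : Fin d → ℝ) (hΔx : ∀ i, 0 < Δx i) (Δt : ℝ) (hΔt : 0 < Δt)
    (winf : ℝ) (hwinf : 0 ≤ winf) (hCFL : winf * ∑ i, Δt / Δx i < 1/2)
    (a : (Fin d → ℤ) → Fin d → ℝ) (ha : ∀ J i, |a J i| ≤ winf)
    (ρ : (Fin d → ℤ) → ℝ) (hρ : ∀ J, 0 ≤ ρ J) (J : Fin d → ℤ) :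
    0 ≤ upwindStep Δx Δt a ρ J := by
  have hc : ∀ i, 0 < Δt / Δx i := fun i => div_pos hΔt (hΔx i)
  rw [upwindStep]
  have hsplit : ∀ i : Fin d,
      (Δt / Δx i) * (pos (a J i) * ρ J - neg (a (J + Pi.single i 1) i) * ρ (J + Pi.single i 1)
        - pos (a (J - Pi.single i 1) i) * ρ (J - Pi.single i 1) + neg (a J i) * ρ J)
      = (Δt / Δx i) * ((pos (a J i) + neg (a J i)) * ρ J)
        - (Δt / Δx i) * (neg (a (J + Pi.single i 1) i) * ρ (J + Pi.single i 1)
          + pos (a (J - Pi.single i 1) i) * ρ (J - Pi.single i 1)) := by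
    intro i; ring
  rw [Finset.sum_congr rfl (fun i _ => hsplit i), Finset.sum_sub_distrib]
  have h2 : 0 ≤ ∑ i : Fin d, (Δt / Δx i) * (neg (a (J + Pi.single i 1) i) * ρ (J + Pi.single i 1)
      + pos (a (J - Pi.single i 1) i) * ρ (J - Pi.single i 1)) := by
    apply Finset.sum_nonneg; intro i _
    exact mul_nonneg (hc i).le (add_nonneg
      (mul_nonneg (neg_nonneg' _) (hρ _)) (mul_nonneg (pos_nonneg' _) (hρ _)))
  have h1 : ∑ i : Fin d, (Δt / Δx i) * ((pos (a J i) + neg (a J i)) * ρ J) ≤ ρ J := by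
    calc ∑ i : Fin d, (Δt / Δx i) * ((pos (a J i) + neg (a J i)) * ρ J)
        ≤ ∑ i : Fin d, (Δt / Δx i) * (winf * ρ J) := by
          apply Finset.sum_le_sum; intro i _
          apply mul_le_mul_of_nonneg_left _ (hc i).le
          exact mul_le_mul_of_nonneg_right (by rw [pos_add_neg']; exact ha J i) (hρ J)
      _ = (winf * ∑ i, Δt / Δx i) * ρ J := by rw [← Finset.sum_mul]; ring
      _ ≤ (1/2) * ρ J := mul_le_mul_of_nonneg_right hCFL.le (hρ J)
      _ ≤ ρ J := by linarith [hρ J]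
  linarith

def flux {d : ℕ} (a : (Fin d → ℤ) → Fin d → ℝ) (ρ : (Fin d → ℤ) → ℝ)
    (i : Fin d) (J : Fin d → ℤ) : ℝ :=
  pos (a J i) * ρ J - neg (a (J + Pi.single i 1) i) * ρ (J + Pi.single i 1)

lemma stepMass {d : ℕ} (Δx : Fin d → ℝ) (Δt : ℝ) (winf : ℝ)
    (a : (Fin d → ℤ) → Fin d → ℝ) (ha : ∀ J i, |a J i| ≤ winf)
    (ρ : (Fin d → ℤ) → ℝ) (hρ : ∀ J, 0 ≤ ρ J) (hsum : HasSum ρ 1) :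
    HasSum (upwindStep Δx Δt a ρ) 1 := by
  have hρs : Summable ρ := hsum.summable
  have hρshift : ∀ c : Fin d → ℤ, Summable fun J => ρ (J + c) := by
    intro c
    have h := ((Equiv.addRight c).summable_iff (f := ρ)).mpr hρs
    exact h
  have hHsum : ∀ i, Summable (flux a ρ i) := by
    intro i
    apply Summable.sub
    · exact Summable.of_nonneg_of_le (fun J => mul_nonneg (pos_nonneg' _) (hρ J))
        (fun J => mul_le_mul_of_nonneg_right ((pos_le_abs' _).trans (ha J i)) (hρ J))
        (hρs.mul_left winf)
    · exact Summable.of_nonneg_of_le (fun J => mul_nonneg (neg_nonneg' _) (hρ _))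
        (fun J => mul_le_mul_of_nonneg_right ((neg_le_abs'' _).trans (ha _ i)) (hρ _))
        ((hρshift (Pi.single i 1)).mul_left winf)
  have hshift : ∀ i, HasSum (fun J => flux a ρ i J - flux a ρ i (J - Pi.single i 1)) 0 := by
    intro i
    obtain ⟨S, hS⟩ := hHsum i
    have hS2 : HasSum (fun (J : Fin d → ℤ) => flux a ρ i (J - Pi.single i 1)) S := by
      have h := (Equiv.hasSum_iff (Equiv.subRight (Pi.single i 1 : Fin d → ℤ))
        (f := flux a ρ i) (a := S)).mpr hS
      exact h
    simpa using hS.sub hS2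
  have hinner : HasSum
      (fun J => ∑ i : Fin d, (Δt / Δx i) * (flux a ρ i J - flux a ρ i (J - Pi.single i 1))) 0 := by
    have := hasSum_sum (s := Finset.univ)
      (f := fun (i : Fin d) (J : Fin d → ℤ) =>
        (Δt / Δx i) * (flux a ρ i J - flux a ρ i (J - Pi.single i 1)))
      (a := fun _ => (0:ℝ)) (fun i _ => by simpa using (hshift i).mul_left (Δt / Δx i))
    simpa using this
  have hterm : upwindStep Δx Δt a ρ
      = fun J => ρ J - ∑ i : Fin d, (Δt / Δx i) * (flux a ρ i J - flux a ρ i (J - Pi.single i 1)) := by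
    funext J
    rw [upwindStep]
    congr 1
    apply Finset.sum_congr rfl
    intro i _
    have hJ : J - Pi.single i 1 + Pi.single i 1 = J := sub_add_cancel J _
    unfold flux
    rw [hJ]
    ring
  rw [hterm]
  simpa using hsum.sub hinner

lemma cell_measurable {d : ℕ} (Δx : Fin d → ℝ) (J : Fin d → ℤ) :
    MeasurableSet (cell Δx J) := by
  have h : cell Δx J = ⋂ i, (fun y : Euc d => y i) ⁻¹'
      (Set.Ico (((J i : ℝ) - 1/2) * Δx i) (((J i : ℝ) + 1/2) * Δx i)) := by
    ext y
    simp [cell, Set.mem_iInter, Set.mem_Ico]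
  rw [h]
  exact MeasurableSet.iInter fun i =>
    ((EuclideanSpace.proj (𝕜 := ℝ) i).continuous.measurable) measurableSet_Ico

lemma cell_disjoint {d : ℕ} (Δx : Fin d → ℝ) (hΔx : ∀ i, 0 < Δx i) :
    Pairwise (Function.onFun Disjoint fun J : Fin d → ℤ => cell Δx J) := by
  have key : ∀ (J K : Fin d → ℤ) (i : Fin d), J i < K i → ∀ y : Euc d,
      y ∈ cell Δx J → y ∈ cell Δx K → False := by
    intro J K i hi y hy hy'
    have h1 : (J i : ℝ) + 1 ≤ K i := by exact_mod_cast hi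
    have h2 := (hy i).2
    have h3 := (hy' i).1
    have h4 : ((J i : ℝ) + 1/2) * Δx i ≤ ((K i : ℝ) - 1/2) * Δx i :=
      mul_le_mul_of_nonneg_right (by linarith) (hΔx i).le
    linarith
  intro J K hJK
  rw [Function.onFun, Set.disjoint_left]
  intro y hy hy'
  obtain ⟨i, hi⟩ := Function.ne_iff.mp hJK
  rcases lt_or_gt_of_ne hi with h | h
  · exact key J K i h y hy hy'
  · exact key K J i h y hy' hy

lemma cell_cover {d : ℕ} (Δx : Fin d → ℝ) (hΔx : ∀ i, 0 < Δx i) :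
    ⋃ J : Fin d → ℤ, cell Δx J = Set.univ := by
  ext y
  simp only [Set.mem_iUnion, Set.mem_univ, iff_true]
  refine ⟨fun i => ⌊y i / Δx i + 1/2⌋, fun i => ?_⟩
  set c : ℝ := y i / Δx i with hc
  have h1 : (⌊c + 1/2⌋ : ℝ) ≤ c + 1/2 := Int.floor_le _
  have h2 : c + 1/2 < ⌊c + 1/2⌋ + 1 := Int.lt_floor_add_one _
  have hy : y i = c * Δx i := by
    rw [hc, div_mul_cancel₀]
    exact (hΔx i).ne'
  constructor
  · rw [hy]
    exact mul_le_mul_of_nonneg_right (by linarith) (hΔx i).le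
  · rw [hy]
    exact mul_lt_mul_of_pos_right (by linarith) (hΔx i)

lemma baseSum {d : ℕ} (Δx : Fin d → ℝ) (hΔx : ∀ i, 0 < Δx i)
    (μ : Measure (Euc d)) [IsProbabilityMeasure μ] :
    HasSum (fun J : Fin d → ℤ => (μ (cell Δx J)).toReal) 1 := by
  have h1 : μ (⋃ J : Fin d → ℤ, cell Δx J) = ∑' J : Fin d → ℤ, μ (cell Δx J) :=
    measure_iUnion (cell_disjoint Δx hΔx) (cell_measurable Δx)
  rw [cell_cover Δx hΔx, measure_univ] at h1
  have h2 := ENNReal.hasSum_toReal (f := fun J : Fin d → ℤ => μ (cell Δx J))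
    (by rw [← h1]; exact ENNReal.one_ne_top)
  have h3 : ∑' J : Fin d → ℤ, (μ (cell Δx J)).toReal = 1 := by
    rw [← ENNReal.tsum_toReal_eq (fun J => (measure_lt_top μ _).ne), ← h1, ENNReal.toReal_one]
  simpa [h3] using h2

/-- Under the strict 1/2-CFL condition, the upwind scheme preserves nonnegativity
and total mass, and the discrete velocities are bounded by `w∞`. -/
theorem stmt5 {d : ℕ} (hd : 1 ≤ d) (W : Euc d → ℝ) (lam winf : ℝ) (hwinf : 0 ≤ winf)
    (hsymm : ∀ x : Euc d, W (-x) = W x) (hW0 : W 0 = 0)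
    (hconv : ConvexOn ℝ Set.univ (fun x : Euc d => W x - lam / 2 * ‖x‖ ^ 2))
    (hC1 : ContDiffOn ℝ 1 W {(0 : Euc d)}ᶜ)
    (hbound : ∀ x : Euc d, x ≠ 0 → ‖gradient W x‖ ≤ winf)
    (Δx : Fin d → ℝ) (hΔx : ∀ i, 0 < Δx i) (Δt : ℝ) (hΔt : 0 < Δt)
    (hCFL : winf * ∑ i, Δt / Δx i < 1 / 2)
    (ρini : Measure (Euc d)) [IsProbabilityMeasure ρini]
    (ρ : ℕ → (Fin d → ℤ) → ℝ)
    (h0 : ∀ J, ρ 0 J = (ρini (cell Δx J)).toReal)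
    (hrec : ∀ n, ρ (n + 1) = upwindStep Δx Δt (discVel W Δx (ρ n)) (ρ n)) :
    ∀ n : ℕ, (∀ J, 0 ≤ ρ n J) ∧
      (∀ J i, |discVel W Δx (ρ n) J i| ≤ winf) ∧
      HasSum (ρ n) 1 := by
  intro n
  induction n with
  | zero =>
    have hnn : ∀ J, 0 ≤ ρ 0 J := by
      intro J; rw [h0 J]; exact ENNReal.toReal_nonneg
    have hs : HasSum (ρ 0) 1 := by
      have := baseSum Δx hΔx ρini
      rwa [show (fun J : Fin d → ℤ => (ρini (cell Δx J)).toReal) = ρ 0 from (funext h0).symm] at this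
    exact ⟨hnn, fun J i => velBound W winf hwinf hbound Δx (ρ 0) hnn hs J i, hs⟩
  | succ n ih =>
    obtain ⟨hnn, hv, hs⟩ := ih
    have hnn' : ∀ J, 0 ≤ ρ (n + 1) J := by
      intro J; rw [hrec n]
      exact stepNonneg Δx hΔx Δt hΔt winf hwinf hCFL _ (fun J i => hv J i) (ρ n) hnn J
    have hs' : HasSum (ρ (n + 1)) 1 := by
      rw [hrec n]
      exact stepMass Δx Δt winf _ (fun J i => hv J i) (ρ n) hnn hs
    exact ⟨hnn', fun J i => velBound W winf hwinf hbound Δx (ρ (n + 1)) hnn' hs' J i, hs'⟩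
end
end
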